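/- Let g be a nonvanishing holomorphic function and ω = h dz a nonvanishing holomorphic 1-form on a domain D ⊂ C, with φ := g_z/(g² h). If g̃ = (a g + b)/(b̄ g + ā) and ω̃ = (b̄ g + ā)² ω with |a|² - |b|² = 1, and φ̃ := g̃_z/(g̃² h̃) where ω̃ = h̃ dz, then φ̃ = φ/Δ², where Δ := (a g + b)(ā/g + b̄). -/

import Mathlib

open Complex

theorem stmt6 (D : Set ℂ) (hD : IsOpen D)
    (g h : ℂ → ℂ) (a b : ℂ)
    (hg : DifferentiableOn ℂ g D) (hh : DifferentiableOn ℂ h D)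
    (hg0 : ∀ z ∈ D, g z ≠ 0) (hh0 : ∀ z ∈ D, h z ≠ 0)
    (hab : ‖a‖ ^ 2 - ‖b‖ ^ 2 = 1)
    (hden : ∀ z ∈ D, (starRingEnd ℂ) b * g z + (starRingEnd ℂ) a ≠ 0)
    (gt ht φ φt Δ : ℂ → ℂ)
    (hgt : ∀ z, gt z = (a * g z + b) / ((starRingEnd ℂ) b * g z + (starRingEnd ℂ) a))
    (hht : ∀ z, ht z = ((starRingEnd ℂ) b * g z + (starRingEnd ℂ) a) ^ 2 * h z)
    (hφ : ∀ z, φ z = deriv g z / (g z ^ 2 * h z))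
    (hφt : ∀ z, φt z = deriv gt z / (gt z ^ 2 * ht z))
    (hΔ : ∀ z, Δ z = (a * g z + b) * ((starRingEnd ℂ) a / g z + (starRingEnd ℂ) b)) :
    ∀ z ∈ D, φt z = φ z / Δ z ^ 2 := by
  have hgtf := funext hgt
  have hhtf := funext hht
  have hφf := funext hφ
  have hφtf := funext hφt
  have hΔf := funext hΔ
  subst hgtf hhtf hφf hφtf hΔf
  have hdet : a * (starRingEnd ℂ) a - b * (starRingEnd ℂ) b = 1 := by
    rw [Complex.mul_conj, Complex.mul_conj, ← Complex.ofReal_sub,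
      Complex.normSq_eq_norm_sq, Complex.normSq_eq_norm_sq, hab, Complex.ofReal_one]
  intro z hz
  have hga : DifferentiableAt ℂ g z := hg.differentiableAt (hD.mem_nhds hz)
  have hv0 : (starRingEnd ℂ) b * g z + (starRingEnd ℂ) a ≠ 0 := hden z hz
  have hu : DifferentiableAt ℂ (fun w => a * g w + b) z := (hga.const_mul a).add_const b
  have hv : DifferentiableAt ℂ (fun w => (starRingEnd ℂ) b * g w + (starRingEnd ℂ) a) z :=
    (hga.const_mul _).add_const _
  have hder : deriv (fun w => (a * g w + b) / ((starRingEnd ℂ) b * g w + (starRingEnd ℂ) a)) z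
      = deriv g z / ((starRingEnd ℂ) b * g z + (starRingEnd ℂ) a) ^ 2 := by
    rw [deriv_fun_div hu hv hv0]
    have h1 : deriv (fun w => a * g w + b) z = a * deriv g z := by
      simp [deriv_const_mul _ hga]
    have h2 : deriv (fun w => (starRingEnd ℂ) b * g w + (starRingEnd ℂ) a) z
        = (starRingEnd ℂ) b * deriv g z := by
      simp [deriv_const_mul _ hga]
    rw [h1, h2]
    field_simp
    linear_combination deriv g z * hdet
  simp only
  rw [hder]
  by_cases hab0 : a * g z + b = 0
  · simp [hab0]
  · have hgz : g z ≠ 0 := hg0 z hz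
    have hhz : h z ≠ 0 := hh0 z hz
    have hfrac : (starRingEnd ℂ) a / g z + (starRingEnd ℂ) b
        = ((starRingEnd ℂ) b * g z + (starRingEnd ℂ) a) / g z := by
      field_simp; ring
    have hA : ((a * g z + b) / ((starRingEnd ℂ) b * g z + (starRingEnd ℂ) a)) ^ 2 *
        (((starRingEnd ℂ) b * g z + (starRingEnd ℂ) a) ^ 2 * h z) ≠ 0 :=
      mul_ne_zero (pow_ne_zero _ (div_ne_zero hab0 hv0))
        (mul_ne_zero (pow_ne_zero _ hv0) hhz)
    have hB : ((a * g z + b) * ((starRingEnd ℂ) a / g z + (starRingEnd ℂ) b)) ^ 2 ≠ 0 := by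
      rw [hfrac]
      exact pow_ne_zero _ (mul_ne_zero hab0 (div_ne_zero hv0 hgz))
    rw [div_eq_div_iff hA hB]
    field_simp
    ring
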